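/- Let G be a transition graph with n vertices. Then for every set S in F(G) there exists an (s,t)-path P in G with label set ℓ(P) = S whose length is at most (|S| + 1)·n. -/

import Mathlib

structure TransitionGraph (V E U : Type*) where
  src : E → V
  tgt : E → V
  s : V
  t : V
  lab : E → Option U

namespace TransitionGraph

variable {V E U : Type*}

/-- An `(s,t)`-path: a finite sequence of edges forming a walk from `s` to `t`
(the empty path counts only when `s = t`). -/
def IsSTPath (G : TransitionGraph V E U) (P : List E) : Prop :=
  List.Chain' (fun e f => G.tgt e = G.src f) P ∧
    ((P = [] ∧ G.s = G.t) ∨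
      ∃ h : P ≠ [], G.src (P.head h) = G.s ∧ G.tgt (P.getLast h) = G.t)

/-- The label set of a path: the set of (non-`none`) labels of its edges. -/
def labelSet [DecidableEq U] (G : TransitionGraph V E U) (P : List E) : Finset U :=
  (P.filterMap G.lab).toFinset

/-- The family `F(G)` of all label sets of `(s,t)`-paths. -/
def labelFamily [DecidableEq U] (G : TransitionGraph V E U) : Set (Finset U) :=
  {S | ∃ P : List E, G.IsSTPath P ∧ G.labelSet P = S}

end TransitionGraph

section Aux

open TransitionGraph

variable {V E U : Type*} [Fintype V] [DecidableEq U]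

lemma labelSet_append' (G : TransitionGraph V E U) (a b : List E) :
    G.labelSet (a ++ b) = G.labelSet a ∪ G.labelSet b := by
  simp [TransitionGraph.labelSet, List.filterMap_append]

lemma labelSet_subset_of_sublist' (G : TransitionGraph V E U) {a b : List E}
    (h : a.Sublist b) : G.labelSet a ⊆ G.labelSet b := by
  intro x hx
  simp only [TransitionGraph.labelSet, List.mem_toFinset] at *
  exact (h.filterMap G.lab).subset hx

lemma shorten' (G : TransitionGraph V E U) (P : List E) (hP : G.IsSTPath P)
    (hlen : ((G.labelSet P).card + 1) * Fintype.card V < P.length) :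
    ∃ P', G.IsSTPath P' ∧ G.labelSet P' = G.labelSet P ∧ P'.length < P.length := by
  have hVpos : 0 < Fintype.card V := Fintype.card_pos_iff.mpr ⟨G.s⟩
  have hNpos : 0 < P.length := by nlinarith
  have hne : P ≠ [] := List.ne_nil_of_length_pos hNpos
  obtain ⟨hchain, hends⟩ := hP
  rcases hends with ⟨h0, _⟩ | ⟨_, hhead, hlast⟩
  · exact absurd h0 hne
  -- vertex sequence
  set N := P.length with hN
  set vert : ℕ → V := fun i => if h : i < N then G.src (P[i]'h) else G.t with hvert
  have hsrc : ∀ i (h : i < N), G.src (P[i]'h) = vert i := by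
    intro i h; simp [hvert, h]
  have hvert0 : vert 0 = G.s := by
    rw [← hsrc 0 hNpos, ← List.head_eq_getElem_zero hne]
    exact hhead
  have hvertN : vert N = G.t := by simp [hvert]
  have htgt : ∀ i (h : i < N), G.tgt (P[i]'h) = vert (i + 1) := by
    intro i h
    by_cases h' : i + 1 < N
    · rw [← hsrc (i+1) h']
      have := List.isChain_iff_getElem.mp hchain i (by omega)
      simpa [List.get_eq_getElem] using this
    · have hi : i = N - 1 := by omega
      have : vert (i+1) = G.t := by simp [hvert, h']
      rw [this]
      subst hi
      rw [show P[N-1]'h = P.getLast hne from (List.getLast_eq_getElem hne).symm]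
      exact hlast
  -- prefix label sets
  set L : ℕ → Finset U := fun i => G.labelSet (P.take i) with hL
  have hLsub : ∀ i j : ℕ, i ≤ j → L i ⊆ L j := by
    intro i j hij
    have h1 : (P.take j).take i = P.take i := by
      rw [List.take_take, min_eq_left hij]
    have : (P.take i).Sublist (P.take j) := h1 ▸ List.take_sublist i (P.take j)
    exact labelSet_subset_of_sublist' G this
  have hLS : ∀ i : ℕ, L i ⊆ G.labelSet P :=
    fun i => labelSet_subset_of_sublist' G (List.take_sublist i P)
  -- pigeonhole
  set c := (G.labelSet P).card with hc
  have hcard : Fintype.card (Fin (c + 1) × V) < Fintype.card (Fin (N + 1)) := by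
    simp only [Fintype.card_prod, Fintype.card_fin]
    omega
  set f : Fin (N + 1) → Fin (c + 1) × V :=
    fun i => (⟨(L i).card, Nat.lt_succ_of_le (Finset.card_le_card (hLS i))⟩, vert i) with hf
  obtain ⟨a, b, hab, hfab⟩ := Fintype.exists_ne_map_eq_of_card_lt f hcard
  have hkey : ∃ i j : Fin (N + 1), i < j ∧ f i = f j := by
    rcases hab.lt_or_gt with h | h
    exacts [⟨a, b, h, hfab⟩, ⟨b, a, h, hfab.symm⟩]
  obtain ⟨i, j, hij, hfij⟩ := hkey
  have hvij : vert i = vert j := congrArg Prod.snd hfij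
  have hcij : (L i).card = (L j).card := by
    have := congrArg (fun p => (p.1 : ℕ)) hfij
    simpa [hf] using this
  have hLij : L (i : ℕ) = L (j : ℕ) :=
    Finset.eq_of_subset_of_card_le (hLsub _ _ (le_of_lt hij)) (le_of_eq hcij.symm)
  have hijlt : (i : ℕ) < (j : ℕ) := hij
  have hjle : (j : ℕ) ≤ N := by omega
  -- the shortened path
  refine ⟨P.take i ++ P.drop j, ⟨?_, ?_⟩, ?_, ?_⟩
  · -- chain
    rw [List.Chain', List.isChain_append]
    refine ⟨List.IsChain.take hchain _, List.IsChain.drop hchain _, ?_⟩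
    intro x hx y hy
    -- x is the last edge of the prefix, y the first of the suffix
    have hdne : P.drop (j : ℕ) ≠ [] := by
      intro h; rw [h] at hy; simp at hy
    have hjN : (j : ℕ) < N := by
      by_contra h
      exact hdne (List.drop_eq_nil_of_le (by omega))
    have htne : P.take (i : ℕ) ≠ [] := by
      intro h; rw [h] at hx; simp at hx
    have hipos : 0 < (i : ℕ) := by
      rcases Nat.eq_zero_or_pos (i : ℕ) with h | h
      · simp [h] at htne
      · exact h
    have hx' : x = (P.take (i : ℕ)).getLast htne := by
      have := List.getLast?_eq_getLast_of_ne_nil htne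
      rw [this] at hx; exact (Option.mem_some_iff.mp hx).symm
    have hy' : y = (P.drop (j : ℕ)).head hdne := by
      have := List.head?_eq_head hdne
      rw [this] at hy; exact (Option.mem_some_iff.mp hy).symm
    rw [hx', hy', List.head_drop, List.getLast_take]
    have hiN : (i : ℕ) - 1 < N := by omega
    rw [List.getElem?_eq_getElem hiN]
    simp only [Option.getD_some]
    rw [htgt _ hiN, hsrc _ (by omega : (j:ℕ) < N)]
    have : (i : ℕ) - 1 + 1 = (i : ℕ) := by omega
    rw [this, hvij]
  · -- endpoints
    by_cases hi0 : (i : ℕ) = 0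
    · by_cases hjN : (j : ℕ) = N
      · left
        constructor
        · simp [hi0, hjN, List.drop_eq_nil_of_le (le_of_eq hN.symm)]
        · calc G.s = vert 0 := hvert0.symm
            _ = vert (i : ℕ) := by rw [hi0]
            _ = vert (j : ℕ) := hvij
            _ = vert N := by rw [hjN]
            _ = G.t := hvertN
      · right
        have hjlt : (j : ℕ) < N := lt_of_le_of_ne hjle hjN
        have hdne : P.drop (j : ℕ) ≠ [] := by
          intro h
          have := List.drop_eq_nil_iff.mp h
          omega
        have hne' : P.take (i : ℕ) ++ P.drop (j : ℕ) ≠ [] := by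
          simp [hi0, hdne]
        refine ⟨hne', ?_, ?_⟩
        · have h1 : (P.take (i : ℕ) ++ P.drop (j : ℕ)).head hne' =
              (P.drop (j : ℕ)).head hdne := by
            simp [hi0]
          rw [h1, List.head_drop, hsrc _ hjlt, ← hvij]
          have : vert (i : ℕ) = vert 0 := by rw [hi0]
          rw [this, hvert0]
        · have h1 : (P.take (i : ℕ) ++ P.drop (j : ℕ)).getLast hne' =
              (P.drop (j : ℕ)).getLast hdne := by
            simp [hi0]
          rw [h1, List.getLast_drop]
          exact hlast
    · right
      have hipos : 0 < (i : ℕ) := Nat.pos_of_ne_zero hi0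
      have htne : P.take (i : ℕ) ≠ [] := by
        intro h
        have := List.take_eq_nil_iff.mp h
        rcases this with h | h
        · exact hi0 h
        · exact hne h
      have hne' : P.take (i : ℕ) ++ P.drop (j : ℕ) ≠ [] := by
        simp [htne]
      refine ⟨hne', ?_, ?_⟩
      · have h1 : (P.take (i : ℕ) ++ P.drop (j : ℕ)).head hne' =
            (P.take (i : ℕ)).head htne := List.head_append_of_ne_nil htne
        rw [h1, List.head_take]
        exact hhead
      · by_cases hjN : (j : ℕ) = N
        · have hd : P.drop (j : ℕ) = [] := List.drop_eq_nil_of_le (by omega)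
          have h1 : (P.take (i : ℕ) ++ P.drop (j : ℕ)).getLast hne' =
              (P.take (i : ℕ)).getLast htne := by
            simp [hd]
          rw [h1, List.getLast_take]
          have hiN : (i : ℕ) - 1 < N := by omega
          rw [List.getElem?_eq_getElem hiN]
          simp only [Option.getD_some]
          rw [htgt _ hiN]
          have : (i : ℕ) - 1 + 1 = (i : ℕ) := by omega
          rw [this, hvij, hjN, hvertN]
        · have hjlt : (j : ℕ) < N := lt_of_le_of_ne hjle hjN
          have hdne : P.drop (j : ℕ) ≠ [] := by
            intro h
            have := List.drop_eq_nil_iff.mp h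
            omega
          have h1 : (P.take (i : ℕ) ++ P.drop (j : ℕ)).getLast hne' =
              (P.drop (j : ℕ)).getLast hdne := List.getLast_append_of_ne_nil _ hdne
          rw [h1, List.getLast_drop]
          exact hlast
  · -- label set
    rw [labelSet_append']
    conv_rhs => rw [← List.take_append_drop (j : ℕ) P, labelSet_append']
    rw [show G.labelSet (P.take (i : ℕ)) = G.labelSet (P.take (j : ℕ)) from hLij]
  · -- length
    simp only [List.length_append, List.length_take, List.length_drop]
    omega

lemma exists_short' (G : TransitionGraph V E U) :
    ∀ (n : ℕ) (P : List E), P.length ≤ n → G.IsSTPath P →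
      ∃ P', G.IsSTPath P' ∧ G.labelSet P' = G.labelSet P ∧
        P'.length ≤ ((G.labelSet P).card + 1) * Fintype.card V := by
  intro n
  induction n with
  | zero =>
    intro P hlen hP
    exact ⟨P, hP, rfl, by omega⟩
  | succ n ih =>
    intro P hlen hP
    by_cases h : P.length ≤ ((G.labelSet P).card + 1) * Fintype.card V
    · exact ⟨P, hP, rfl, h⟩
    · obtain ⟨P', hP', hlab, hlt⟩ := shorten' G P hP (by omega)
      obtain ⟨P'', hP'', hlab'', hlen''⟩ := ih P' (by omega) hP'
      exact ⟨P'', hP'', by rw [hlab'', hlab], by rw [hlab] at hlen''; exact hlen''⟩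

end Aux

theorem stmt0 {V E U : Type*} [Fintype V] [Fintype E] [Fintype U] [DecidableEq U]
    (G : TransitionGraph V E U) (S : Finset U) (hS : S ∈ G.labelFamily) :
    ∃ P : List E, G.IsSTPath P ∧ G.labelSet P = S ∧
      P.length ≤ (S.card + 1) * Fintype.card V := by
  obtain ⟨P, hP, hPS⟩ := hS
  obtain ⟨P', hP', hlab, hlen⟩ := exists_short' G P.length P le_rfl hP
  exact ⟨P', hP', by rw [hlab, hPS], by rwa [hPS] at hlen⟩
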